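/- Suppose a Lax matrix L (an n×n matrix of functions on a Poisson manifold) satisfies {L ⊗ 1, 1 ⊗ L} = [R_{12}, L ⊗ 1] - [R_{21}, 1 ⊗ L] for some matrix R_{12} ∈ M_n ⊗ M_n of functions. Then the functions I_k = Tr(L^k) are in involution: {I_k, I_m} = 0 for all k, m ≥ 1. -/
import Mathlib


open Kronecker


section auxL
variable {A : Type*} [CommRing A] {n : ℕ}

lemma derMapMul {D : A → A} (hadd : ∀ a b, D (a + b) = D a + D b)
    (hmul : ∀ a b, D (a * b) = D a * b + a * D b)
    (M N : Matrix (Fin n) (Fin n) A) :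
    (M * N).map D = M.map D * N + M * N.map D := by
  have hD : ∀ (f : Fin n → A), D (∑ x, f x) = ∑ x, D (f x) := fun f =>
    map_sum (AddMonoidHom.mk' D hadd) f Finset.univ
  ext i j
  simp only [Matrix.map_apply, Matrix.mul_apply, Matrix.add_apply]
  rw [hD, ← Finset.sum_add_distrib]
  exact Finset.sum_congr rfl fun t _ => hmul _ _

lemma derMapPow {D : A → A} (hadd : ∀ a b, D (a + b) = D a + D b)
    (hmul : ∀ a b, D (a * b) = D a * b + a * D b)
    (L : Matrix (Fin n) (Fin n) A) :
    ∀ m : ℕ, (L ^ (m + 1)).map D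
      = ∑ i ∈ Finset.range (m + 1), L ^ i * L.map D * L ^ (m - i) := by
  intro m
  induction m with
  | zero => simp
  | succ m ih =>
    rw [pow_succ, derMapMul hadd hmul, ih, Finset.sum_range_succ
      (f := fun i => L ^ i * L.map D * L ^ (m + 1 - i)) (n := m + 1)]
    rw [Finset.sum_mul]
    have h1 : ∀ i ∈ Finset.range (m + 1),
        L ^ i * L.map D * L ^ (m - i) * L = L ^ i * L.map D * L ^ (m + 1 - i) := by
      intro i hi
      rw [Finset.mem_range] at hi
      rw [mul_assoc, ← pow_succ]
      congr 2
      omega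
    rw [Finset.sum_congr rfl h1]
    simp

lemma traceDerPow {D : A → A} (hadd : ∀ a b, D (a + b) = D a + D b)
    (hmul : ∀ a b, D (a * b) = D a * b + a * D b)
    (L : Matrix (Fin n) (Fin n) A) (m : ℕ) :
    ((L ^ (m + 1)).map D).trace = (m + 1) • (L ^ m * L.map D).trace := by
  rw [derMapPow hadd hmul L m, Matrix.trace_sum]
  have h1 : ∀ i ∈ Finset.range (m + 1),
      (L ^ i * L.map D * L ^ (m - i)).trace = (L ^ m * L.map D).trace := by
    intro i hi
    rw [Finset.mem_range] at hi
    rw [Matrix.trace_mul_comm, ← mul_assoc, ← pow_add]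
    congr 3
    omega
  rw [Finset.sum_congr rfl h1, Finset.sum_const, Finset.card_range]

lemma derTracePow {D : A → A} (hadd : ∀ a b, D (a + b) = D a + D b)
    (hmul : ∀ a b, D (a * b) = D a * b + a * D b)
    (L : Matrix (Fin n) (Fin n) A) (m : ℕ) :
    D ((L ^ (m + 1)).trace) = (m + 1) • (L ^ m * L.map D).trace := by
  rw [← traceDerPow hadd hmul L m]
  have : D (∑ i, (L ^ (m + 1)).diag i) = ∑ i, D ((L ^ (m + 1)).diag i) :=
    map_sum (AddMonoidHom.mk' D hadd) _ _
  simpa [Matrix.trace, Matrix.diag, Matrix.map_apply] using this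

lemma keyTrace (L : Matrix (Fin n) (Fin n) A)
    (R12 R21 : Matrix (Fin n × Fin n) (Fin n × Fin n) A) (a b : ℕ) :
    (((L ^ a) ⊗ₖ (L ^ b)) *
      (R12 * (L ⊗ₖ (1 : Matrix (Fin n) (Fin n) A))
        - (L ⊗ₖ (1 : Matrix (Fin n) (Fin n) A)) * R12
        - (R21 * ((1 : Matrix (Fin n) (Fin n) A) ⊗ₖ L)
          - ((1 : Matrix (Fin n) (Fin n) A) ⊗ₖ L) * R21))).trace = 0 := by
  set M := (L ^ a) ⊗ₖ (L ^ b) with hM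
  have h1 : M * (L ⊗ₖ (1 : Matrix (Fin n) (Fin n) A))
      = (L ⊗ₖ (1 : Matrix (Fin n) (Fin n) A)) * M := by
    rw [hM, ← Matrix.mul_kronecker_mul, ← Matrix.mul_kronecker_mul,
      mul_one, one_mul, ← pow_succ, ← pow_succ']
  have h2 : M * ((1 : Matrix (Fin n) (Fin n) A) ⊗ₖ L)
      = ((1 : Matrix (Fin n) (Fin n) A) ⊗ₖ L) * M := by
    rw [hM, ← Matrix.mul_kronecker_mul, ← Matrix.mul_kronecker_mul,
      mul_one, one_mul, ← pow_succ, ← pow_succ']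
  have cyc : ∀ (R X : Matrix (Fin n × Fin n) (Fin n × Fin n) A), M * X = X * M →
      (M * (R * X)).trace = (M * (X * R)).trace := by
    intro R X h
    rw [← mul_assoc, Matrix.trace_mul_comm, ← mul_assoc, ← h, mul_assoc,
      Matrix.trace_mul_comm]
  rw [mul_sub, mul_sub, mul_sub, Matrix.trace_sub, Matrix.trace_sub,
    Matrix.trace_sub, cyc R12 _ h1, cyc R21 _ h2, sub_self, sub_self, sub_self]

end auxL

/-- If a Lax matrix `L` of functions satisfies
`{L₁, L₂} = [R₁₂, L₁] - [R₂₁, L₂]` for some `R₁₂ ∈ Mₙ ⊗ Mₙ` of functions,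
then the traces `I_k = Tr(L^k)` are in involution.  Here the algebra `A` of
functions on the Poisson manifold carries a Poisson bracket `P` (biadditive,
antisymmetric, Leibniz). -/
theorem traces_in_involution_of_R_matrix
    {A : Type*} [CommRing A] {n : ℕ}
    (P : A → A → A)
    (Padd_left : ∀ a b c : A, P (a + b) c = P a c + P b c)
    (Padd_right : ∀ a b c : A, P a (b + c) = P a b + P a c)
    (Pskew : ∀ a b : A, P a b = - P b a)
    (Pleibniz : ∀ a b c : A, P a (b * c) = P a b * c + b * P a c)
    (L : Matrix (Fin n) (Fin n) A)
    (R12 : Matrix (Fin n × Fin n) (Fin n × Fin n) A)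
    -- `R₂₁` is `R₁₂` with the two tensor factors swapped:
    (R21 : Matrix (Fin n × Fin n) (Fin n × Fin n) A)
    (hR21 : ∀ i j k l : Fin n, R21 (i, k) (j, l) = R12 (k, i) (l, j))
    -- the R-matrix form of the Poisson brackets of the Lax matrix entries:
    (hLax : ∀ i j k l : Fin n,
      P (L i j) (L k l) =
        (R12 * (L ⊗ₖ (1 : Matrix (Fin n) (Fin n) A))
          - (L ⊗ₖ (1 : Matrix (Fin n) (Fin n) A)) * R12
          - (R21 * ((1 : Matrix (Fin n) (Fin n) A) ⊗ₖ L)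
            - ((1 : Matrix (Fin n) (Fin n) A) ⊗ₖ L) * R21)) (i, k) (j, l)) :
    ∀ k m : ℕ, 1 ≤ k → 1 ≤ m → P (L ^ k).trace (L ^ m).trace = 0 := by
  intro k m hk hm
  obtain ⟨k', rfl⟩ : ∃ k', k = k' + 1 := ⟨k - 1, by omega⟩
  obtain ⟨m', rfl⟩ : ∃ m', m = m' + 1 := ⟨m - 1, by omega⟩
  set C := R12 * (L ⊗ₖ (1 : Matrix (Fin n) (Fin n) A))
      - (L ⊗ₖ (1 : Matrix (Fin n) (Fin n) A)) * R12
      - (R21 * ((1 : Matrix (Fin n) (Fin n) A) ⊗ₖ L)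
        - ((1 : Matrix (Fin n) (Fin n) A) ⊗ₖ L) * R21) with hC
  have hz : (((L ^ m') ⊗ₖ (L ^ k')) * C).trace = 0 := keyTrace L R12 R21 m' k'
  set a := (L ^ (k' + 1)).trace with ha
  rw [derTracePow (Padd_right a) (Pleibniz a) L m']
  suffices h : (L ^ m' * L.map (P a)).trace = 0 by rw [h, smul_zero]
  have step : ∀ i j : Fin n, P a (L j i)
      = -((k' + 1) • ∑ p, ∑ q, (L ^ k') p q * C (j, q) (i, p)) := by
    intro i j
    rw [Pskew, derTracePow (Padd_right (L j i)) (Pleibniz (L j i)) L k']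
    congr 2
    simp only [Matrix.trace, Matrix.diag, Matrix.mul_apply, Matrix.map_apply]
    exact Finset.sum_congr rfl fun p _ => Finset.sum_congr rfl fun q _ => by
      rw [hLax j i q p]
  have hz' : ∑ i, ∑ j, ∑ p, ∑ q,
      (L ^ m') i j * ((L ^ k') p q * C (j, q) (i, p)) = 0 := by
    have hzx := hz
    simp only [Matrix.trace, Matrix.diag, Matrix.mul_apply,
      Matrix.kroneckerMap_apply, Fintype.sum_prod_type] at hzx
    rw [← hzx]
    refine Finset.sum_congr rfl fun i _ => ?_
    rw [Finset.sum_comm]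
    exact Finset.sum_congr rfl fun j _ => Finset.sum_congr rfl fun p _ =>
      Finset.sum_congr rfl fun q _ => by ring
  calc (L ^ m' * L.map (P a)).trace
      = ∑ i, ∑ j, (L ^ m') i j * P a (L j i) := by
        simp only [Matrix.trace, Matrix.diag, Matrix.mul_apply, Matrix.map_apply]
    _ = ∑ i, ∑ j, -((k' + 1) •
          ((L ^ m') i j * ∑ p, ∑ q, (L ^ k') p q * C (j, q) (i, p))) := by
        refine Finset.sum_congr rfl fun i _ => Finset.sum_congr rfl fun j _ => ?_
        rw [step i j, mul_neg, mul_smul_comm]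
    _ = 0 := by
        simp only [Finset.mul_sum, smul_neg, Finset.sum_neg_distrib, ← Finset.smul_sum]
        rw [hz', smul_zero, neg_zero]
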